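/- Abel's identity specialization: for every positive integer n, sum_{k=1}^{n-1} binom(n,k) * (k+z)^(k-1) * (n-k+z)^(n-k-1) = (2/z) * ((n+2z)^(n-1) - (n+z)^(n-1)), as an identity of rational functions (equivalently, z * sum_{k=1}^{n-1} binom(n,k) (k+z)^(k-1)(n-k+z)^(n-k-1) = 2(n+2z)^(n-1) - 2(n+z)^(n-1) as polynomials in z). -/
import Mathlib

open Polynomial Finset

noncomputable def A : ℕ → Polynomial ℝ
  | 0 => 1
  | (n+1) => X * (X + C ((n:ℝ)+1)) ^ n

lemma A_eval (n : ℕ) (x : ℝ) : (A (n+1)).eval x = x * (x + (n+1)) ^ n := by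
  simp [A]

lemma poly_eq (p q : Polynomial ℝ) (h : p.derivative = q.derivative)
    (h0 : p.eval 0 = q.eval 0) : p = q := by
  have hd : (p - q).derivative = 0 := by rw [derivative_sub, h, sub_self]
  have := eq_C_of_derivative_eq_zero hd
  have h00 : (p - q).eval 0 = 0 := by simp [h0]
  rw [this, eval_C] at h00
  rw [h00, map_zero] at this
  exact sub_eq_zero.mp this

lemma A_deriv (n : ℕ) : (A (n+1)).derivative = (n+1) • (A n).comp (X + 1) := by
  cases n with
  | zero => simp [A]
  | succ m =>
    simp only [A]
    rw [derivative_mul, derivative_pow, derivative_X, derivative_add, derivative_X,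
      derivative_C]
    rw [nsmul_eq_mul, mul_comp, X_comp, pow_comp, add_comp, X_comp, C_comp,
      ← C_eq_natCast]
    push_cast
    simp only [map_add, map_one, Nat.add_sub_cancel]
    ring

lemma A_eval_zero (k : ℕ) : (A k).eval 0 = if k = 0 then 1 else 0 := by
  cases k with
  | zero => simp [A]
  | succ m => simp [A]

lemma abel_poly (n : ℕ) (y : ℝ) :
    (A n).comp (X + C y)
      = ∑ k ∈ Finset.range (n+1), (n.choose k) • (A k * C ((A (n-k)).eval y)) := by
  induction n with
  | zero => simp [A]
  | succ n ih =>
    apply poly_eq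
    · -- derivatives agree
      rw [derivative_comp]
      simp only [derivative_add, derivative_X, derivative_C, add_zero, one_mul]
      have h1 : ((X:ℝ[X])+1).comp (X + C y) = (X + C y).comp (X+1) := by
        simp [add_comp]; ring
      rw [A_deriv, smul_comp, comp_assoc]
      rw [h1, ← comp_assoc, ih, Polynomial.sum_comp]
      -- now compute derivative of RHS
      conv_rhs => rw [map_sum, Finset.sum_range_succ']
      have h0 : derivative (A 0) = 0 := by simp [A]
      simp only [derivative_smul, derivative_mul, derivative_C, mul_zero, add_zero, h0,
        zero_mul, smul_zero, A_deriv]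
      conv_lhs => rw [Finset.smul_sum]
      simp only [smul_comp, mul_comp, C_comp]
      refine (Finset.sum_congr rfl fun i hi => ?_).symm
      rw [Nat.succ_sub_succ, smul_mul_assoc, smul_smul, smul_smul]
      congr 1
      rw [← Nat.add_one_mul_choose_eq]
    · -- values at 0 agree
      rw [eval_comp]
      simp only [eval_add, eval_X, eval_C, zero_add]
      rw [eval_finset_sum]
      rw [Finset.sum_eq_single 0]
      · simp [A_eval_zero]
      · intro b _ hb
        simp [A_eval_zero, hb]
      · simp

lemma abel_eval (m : ℕ) (z : ℝ) :
    (z + z) * (z + z + (m+1)) ^ m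
      = 2 * (z * (z + (m+1)) ^ m)
        + z^2 * ∑ k ∈ Finset.Ico 1 (m+1),
            (Nat.choose (m+1) k : ℝ) * ((k : ℝ) + z) ^ (k - 1) *
              (((m+1-k : ℕ) : ℝ) + z) ^ (m+1-k-1) := by
  have h2 := congrArg (Polynomial.eval z) (abel_poly (m+1) z)
  rw [eval_comp] at h2
  simp only [eval_add, eval_X, eval_C, eval_finset_sum, eval_smul, eval_mul] at h2
  rw [A_eval] at h2
  rw [h2]
  -- split the sum
  rw [Finset.range_eq_Ico, Finset.sum_eq_sum_Ico_succ_bot (by omega : 0 < m+1+1)]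
  simp only [zero_add]
  rw [Finset.sum_Ico_succ_top (by omega : 1 ≤ m+1)]
  simp only [Nat.choose_zero_right, Nat.sub_zero, one_smul, A_eval_zero, if_pos rfl,
    one_mul, A_eval]
  simp only [Nat.choose_self, Nat.sub_self, A_eval_zero, if_pos rfl, one_smul, mul_one,
    show A 0 = 1 from rfl, eval_one, one_mul]
  rw [Finset.mul_sum]
  have hterm : ∀ k ∈ Finset.Ico 1 (m+1),
      (m+1).choose k • (Polynomial.eval z (A k) * Polynomial.eval z (A (m+1-k)))
        = z^2 * (((m+1).choose k : ℝ) * ((k:ℝ) + z) ^ (k-1) *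
            (((m+1-k : ℕ) : ℝ) + z) ^ (m+1-k-1)) := by
    intro k hk
    simp only [Finset.mem_Ico] at hk
    obtain ⟨j, rfl⟩ : ∃ j, k = j + 1 := ⟨k - 1, by omega⟩
    obtain ⟨i, hi⟩ : ∃ i, m + 1 - (j+1) = i + 1 := ⟨m - (j+1), by omega⟩
    rw [hi, A_eval, A_eval, nsmul_eq_mul, Nat.add_sub_cancel, Nat.add_sub_cancel]
    push_cast
    ring
  rw [Finset.sum_congr rfl hterm, ← Finset.mul_sum]
  ring

/-- An equivalent polynomial form of Lemma 3 (an instance of Abel's binomial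
theorem): `z ∑_{k=1}^{n-1} binom(n,k) (k+z)^(k-1) (n-k+z)^(n-k-1)
= 2(n+2z)^(n-1) - 2(n+z)^(n-1)`, for all real `z` (equivalently, as
polynomials in `z`). -/
theorem abel_identity (n : ℕ) (hn : 1 ≤ n) (z : ℝ) :
    z * ∑ k ∈ Finset.Ico 1 n,
        (Nat.choose n k : ℝ) * ((k : ℝ) + z) ^ (k - 1) *
          (((n - k : ℕ) : ℝ) + z) ^ (n - k - 1)
      = 2 * ((n : ℝ) + 2 * z) ^ (n - 1) - 2 * ((n : ℝ) + z) ^ (n - 1) := by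
  obtain ⟨m, rfl⟩ : ∃ m, n = m + 1 := ⟨n - 1, by omega⟩
  simp only [Nat.add_sub_cancel]
  rcases eq_or_ne z 0 with rfl | hz
  · simp
  · have key := abel_eval m z
    apply mul_left_cancel₀ hz
    push_cast at key ⊢
    linear_combination -key
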